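/- Let H be a hybrid quantum–classical Hamiltonian on Fin n × Fin m, H = (Matrix.diagonal ε ⊗ₖ 1) + (1 ⊗ₖ H_Q) + ∑ i, (γ i : ℂ) • (Matrix.stdBasisMatrix i i 1 ⊗ₖ S i), let o : Fin n → ℝ and O_Q an m×m complex matrix, and suppose the total observable (Matrix.diagonal o ⊗ₖ 1) + (1 ⊗ₖ O_Q) commutes with H. Then for every t : ℝ and every complex matrix ρ indexed by Fin n × Fin m, the local quantum expectation is invariant under the hybrid evolution: Matrix.trace ((1 ⊗ₖ O_Q) * (Matrix.exp ℂ (-(t • Complex.I) • H) * ρ * Matrix.exp ℂ ((t • Complex.I) • H))) = Matrix.trace ((1 ⊗ₖ O_Q) * ρ). (Under momentum/energy conservation, a classical gravitational field obeying Hamiltonian hybrid dynamics cannot change the momentum/energy of a quantum system.) -/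

import Mathlib

open Matrix Kronecker

/-- Under conservation of a global additive observable, a hybrid
quantum–classical Hamiltonian evolution cannot change the expectation value of
the local quantum observable. -/
theorem quantum_expectation_conserved_under_hybrid_evolution
    (n m : ℕ)
    (ε γ : Fin n → ℝ)
    (H_Q : Matrix (Fin m) (Fin m) ℂ)
    (S : Fin n → Matrix (Fin m) (Fin m) ℂ)
    (H : Matrix (Fin n × Fin m) (Fin n × Fin m) ℂ)
    (hH : H = (Matrix.diagonal (fun i => (ε i : ℂ)) ⊗ₖ 1)
        + ((1 : Matrix (Fin n) (Fin n) ℂ) ⊗ₖ H_Q)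
        + ∑ i : Fin n, (γ i : ℂ) • (Matrix.single i i 1 ⊗ₖ S i))
    (o : Fin n → ℝ) (O_Q : Matrix (Fin m) (Fin m) ℂ)
    (hcons : Commute ((Matrix.diagonal (fun i => (o i : ℂ)) ⊗ₖ (1 : Matrix (Fin m) (Fin m) ℂ))
        + ((1 : Matrix (Fin n) (Fin n) ℂ) ⊗ₖ O_Q)) H)
    (t : ℝ) (ρ : Matrix (Fin n × Fin m) (Fin n × Fin m) ℂ) :
    Matrix.trace (((1 : Matrix (Fin n) (Fin n) ℂ) ⊗ₖ O_Q)
        * (NormedSpace.exp (-(t • Complex.I) • H) * ρ * NormedSpace.exp ((t • Complex.I) • H)))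
      = Matrix.trace (((1 : Matrix (Fin n) (Fin n) ℂ) ⊗ₖ O_Q) * ρ) := by
  set D : Matrix (Fin n × Fin m) (Fin n × Fin m) ℂ :=
    Matrix.diagonal (fun i => (o i : ℂ)) ⊗ₖ (1 : Matrix (Fin m) (Fin m) ℂ)
  set O : Matrix (Fin n × Fin m) (Fin n × Fin m) ℂ :=
    (1 : Matrix (Fin n) (Fin n) ℂ) ⊗ₖ O_Q
  -- the classical diagonal observable commutes with H
  have hdiag : ∀ i : Fin n, Commute (Matrix.diagonal (fun i => (o i : ℂ)))
      (Matrix.single i i (1 : ℂ)) := by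
    intro i
    ext a b
    rw [Matrix.mul_apply, Matrix.mul_apply]
    simp only [Matrix.diagonal_apply, Matrix.single, Matrix.of_apply]
    rw [Finset.sum_eq_single a, Finset.sum_eq_single b] <;> aesop
  have hD : Commute D H := by
    rw [hH]
    refine (Commute.add_right (Commute.add_right ?_ ?_) ?_)
    · rw [Commute, SemiconjBy, ← Matrix.mul_kronecker_mul, ← Matrix.mul_kronecker_mul,
        Matrix.diagonal_mul_diagonal, Matrix.diagonal_mul_diagonal, one_mul]
      simp [mul_comm]
    · rw [Commute, SemiconjBy, ← Matrix.mul_kronecker_mul, ← Matrix.mul_kronecker_mul,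
        one_mul, mul_one, Matrix.one_mul, Matrix.mul_one]
    · refine Commute.sum_right _ _ _ fun i _ => Commute.smul_right ?_ _
      rw [Commute, SemiconjBy, ← Matrix.mul_kronecker_mul, ← Matrix.mul_kronecker_mul,
        Matrix.one_mul, Matrix.mul_one, (hdiag i).eq]
  have hO : Commute O H := by
    have := hcons.sub_left hD
    simpa using this
  have hOU : Commute O (NormedSpace.exp (-(t • Complex.I) • H)) :=
    ((hO.smul_right _).exp_right)
  have hVU : NormedSpace.exp ((t • Complex.I) • H) *
      NormedSpace.exp (-(t • Complex.I) • H) = 1 := by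
    rw [← Matrix.exp_add_of_commute _ _ (((Commute.refl H).smul_left _).smul_right _)]
    rw [neg_smul, add_neg_cancel, NormedSpace.exp_zero]
  simp only [Matrix.mul_assoc]
  rw [← Matrix.mul_assoc O, hOU.eq, Matrix.mul_assoc, Matrix.trace_mul_comm]
  simp only [Matrix.mul_assoc]
  rw [hVU, Matrix.mul_one]
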